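/- Let ψ be three times differentiable with ψ' > 0, a > 0, and w(φ) = sqrt(ψ''² + ψ'²(1+ψ')²) > 0. The oriented curvature of the drive-gear centrode X_P(φ) = (aψ'/(1+ψ'))·e^{−iφ} is κ(φ) = (1+ψ'(φ))³·[ψ'(φ)(ψ'''(φ) − ψ'(φ) − ψ'(φ)²) − 2ψ''(φ)²] / (a·w(φ)³). -/

import Mathlib

open Complex

lemma curv_aux (r r1 r2 : ℝ → ℝ) (φ : ℝ)
    (hr : ∀ t, HasDerivAt r (r1 t) t)
    (hr1 : ∀ t, HasDerivAt r1 (r2 t) t)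
    (X T : ℝ → ℂ) (κ : ℝ → ℝ)
    (hX : ∀ t, X t = ((r t : ℝ) : ℂ) * Complex.exp (-(t : ℂ) * Complex.I))
    (hT : ∀ t, T t = deriv X t / (‖deriv X t‖ : ℂ))
    (hκ : deriv T φ = ((‖deriv X φ‖ : ℝ) : ℂ) * (κ φ : ℂ) * Complex.I * T φ)
    (hS : 0 < r1 φ ^ 2 + r φ ^ 2) :
    κ φ * Real.sqrt (r1 φ ^ 2 + r φ ^ 2) ^ 3
      = r φ * r2 φ - r φ ^ 2 - 2 * r1 φ ^ 2 := by
  have hE : ∀ t : ℝ, HasDerivAt (fun s : ℝ => Complex.exp (-(s : ℂ) * Complex.I))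
      (-Complex.I * Complex.exp (-(t : ℂ) * Complex.I)) t := by
    intro t
    have h1 : HasDerivAt (fun z : ℂ => -z * Complex.I) (-Complex.I) (t : ℂ) := by
      simpa using (hasDerivAt_id (t : ℂ)).neg.mul_const Complex.I
    have h2 := (Complex.hasDerivAt_exp (-(t : ℂ) * Complex.I)).comp (t : ℂ) h1
    simpa [mul_comm] using h2.comp_ofReal
  have hu : ∀ t : ℝ, HasDerivAt (fun s : ℝ => ((r1 s : ℝ) : ℂ) - ((r s : ℝ) : ℂ) * Complex.I)
      (((r2 t : ℝ) : ℂ) - ((r1 t : ℝ) : ℂ) * Complex.I) t := by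
    intro t
    exact ((hr1 t).ofReal_comp).sub (((hr t).ofReal_comp).mul_const Complex.I)
  have hXd : ∀ t : ℝ, HasDerivAt X
      ((((r1 t : ℝ) : ℂ) - ((r t : ℝ) : ℂ) * Complex.I) * Complex.exp (-(t : ℂ) * Complex.I)) t := by
    intro t
    have hfun : X = fun s : ℝ => ((r s : ℝ) : ℂ) * Complex.exp (-(s : ℂ) * Complex.I) :=
      funext hX
    rw [hfun]
    have h := ((hr t).ofReal_comp).mul (hE t)
    convert h using 1
    · rfl
    · exact funext fun s => rfl
    ring
  have hF : ∀ t, deriv X t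
      = (((r1 t : ℝ) : ℂ) - ((r t : ℝ) : ℂ) * Complex.I) * Complex.exp (-(t : ℂ) * Complex.I) :=
    fun t => (hXd t).deriv
  set A : ℝ → ℝ := fun t => Real.sqrt (r1 t ^ 2 + r t ^ 2) with hAdef
  have habs : ∀ t, ‖deriv X t‖ = A t := by
    intro t
    rw [hF, norm_mul, Complex.norm_exp]
    simp [hAdef, Complex.norm_def, Complex.normSq_apply]
    rw [show r1 t * r1 t + r t * r t = r1 t ^ 2 + r t ^ 2 by ring]
  have hApos : 0 < A φ := Real.sqrt_pos.mpr hS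
  have hA2 : A φ ^ 2 = r1 φ ^ 2 + r φ ^ 2 := Real.sq_sqrt hS.le
  -- derivative of A
  have hSd : HasDerivAt (fun t => r1 t ^ 2 + r t ^ 2)
      (2 * r1 φ ^ 1 * r2 φ + 2 * r φ ^ 1 * r1 φ) φ := by
    exact (((hr1 φ).pow 2).add ((hr φ).pow 2))
  obtain ⟨m, hA⟩ : ∃ m : ℝ, HasDerivAt A m φ :=
    ⟨_, (Real.hasDerivAt_sqrt hS.ne').comp φ hSd⟩
  have hc0 : ((A φ : ℝ) : ℂ) ≠ 0 := by exact_mod_cast hApos.ne'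
  have hTfun : T = fun t =>
      ((((r1 t : ℝ) : ℂ) - ((r t : ℝ) : ℂ) * Complex.I) * Complex.exp (-(t : ℂ) * Complex.I))
        * ((A t : ℝ) : ℂ)⁻¹ := by
    funext t
    rw [hT, habs, hF, div_eq_mul_inv]
  have hFd : HasDerivAt
      (fun t : ℝ => (((r1 t : ℝ) : ℂ) - ((r t : ℝ) : ℂ) * Complex.I) * Complex.exp (-(t : ℂ) * Complex.I))
      ((((r2 φ : ℝ) : ℂ) - ((r1 φ : ℝ) : ℂ) * Complex.I) * Complex.exp (-(φ : ℂ) * Complex.I)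
        + (((r1 φ : ℝ) : ℂ) - ((r φ : ℝ) : ℂ) * Complex.I) * (-Complex.I * Complex.exp (-(φ : ℂ) * Complex.I))) φ :=
    (hu φ).mul (hE φ)
  have hinv : HasDerivAt (fun t : ℝ => ((A t : ℝ) : ℂ)⁻¹)
      (((-m / (A φ) ^ 2 : ℝ) : ℂ)) φ := by
    have h := ((hA.inv hApos.ne')).ofReal_comp
    simpa [Complex.ofReal_inv] using h
  have hTd : HasDerivAt T
      (((((r2 φ : ℝ) : ℂ) - ((r1 φ : ℝ) : ℂ) * Complex.I) * Complex.exp (-(φ : ℂ) * Complex.I)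
        + (((r1 φ : ℝ) : ℂ) - ((r φ : ℝ) : ℂ) * Complex.I) * (-Complex.I * Complex.exp (-(φ : ℂ) * Complex.I)))
          * ((A φ : ℝ) : ℂ)⁻¹
        + ((((r1 φ : ℝ) : ℂ) - ((r φ : ℝ) : ℂ) * Complex.I) * Complex.exp (-(φ : ℂ) * Complex.I))
          * ((-m / (A φ) ^ 2 : ℝ) : ℂ)) φ := by
    rw [hTfun]
    exact hFd.mul hinv
  have hk := hκ
  rw [hTd.deriv, hT, habs, hF] at hk
  -- cancel the exponential factor
  set e : ℂ := Complex.exp (-(φ : ℂ) * Complex.I) with he_def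
  have he : e ≠ 0 := Complex.exp_ne_zero _
  have hk2 : (((((r2 φ : ℝ) : ℂ) - ((r1 φ : ℝ) : ℂ) * Complex.I)
        + (((r1 φ : ℝ) : ℂ) - ((r φ : ℝ) : ℂ) * Complex.I) * (-Complex.I)) * ((A φ : ℝ) : ℂ)⁻¹
        + (((r1 φ : ℝ) : ℂ) - ((r φ : ℝ) : ℂ) * Complex.I) * ((-m / (A φ) ^ 2 : ℝ) : ℂ)) * e
      = (((A φ : ℝ) : ℂ) * ((κ φ : ℝ) : ℂ) * Complex.I
          * ((((r1 φ : ℝ) : ℂ) - ((r φ : ℝ) : ℂ) * Complex.I) * ((A φ : ℝ) : ℂ)⁻¹)) * e := by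
    linear_combination hk
  have hk3 := mul_right_cancel₀ he hk2
  field_simp [hc0] at hk3
  have e1 := congrArg Complex.re hk3
  have e2 := congrArg Complex.im hk3
  simp [Complex.ext_iff, ← Complex.ofReal_pow] at e1 e2
  show κ φ * A φ ^ 3 = r φ * r2 φ - r φ ^ 2 - 2 * r1 φ ^ 2
  have key : κ φ * A φ ^ 3 * A φ ^ 3
      = (r φ * r2 φ - r φ ^ 2 - 2 * r1 φ ^ 2) * A φ ^ 3 := by
    linear_combination A φ ^ 3 * ((-(r φ)) * e1 + (-(r1 φ)) * e2 + κ φ * A φ * hA2)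
  exact mul_right_cancel₀ (pow_ne_zero 3 hApos.ne') key

theorem curvature_centrode_drive
    (ψ ψ' ψ'' ψ''' : ℝ → ℝ) (a : ℝ) (ha : 0 < a)
    (hd1 : ∀ t, HasDerivAt ψ (ψ' t) t)
    (hd2 : ∀ t, HasDerivAt ψ' (ψ'' t) t)
    (hd3 : ∀ t, HasDerivAt ψ'' (ψ''' t) t)
    (hpos : ∀ t, 0 < ψ' t)
    (w : ℝ → ℝ)
    (hw : ∀ t, w t = Real.sqrt ((ψ'' t) ^ 2 + (ψ' t) ^ 2 * (1 + ψ' t) ^ 2))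
    (hwpos : ∀ t, 0 < w t)
    (X_P : ℝ → ℂ)
    (hX : ∀ t, X_P t =
      ((a * ψ' t / (1 + ψ' t) : ℝ) : ℂ) * Complex.exp (-(t : ℂ) * Complex.I))
    (T : ℝ → ℂ)
    (hT : ∀ t, T t = deriv X_P t / (‖deriv X_P t‖ : ℂ))
    (κ : ℝ → ℝ)
    (hκ : ∀ t, deriv T t =
      ((‖deriv X_P t‖ : ℝ) : ℂ) * (κ t : ℂ) * Complex.I * T t)
    (φ : ℝ) :
    κ φ = (1 + ψ' φ) ^ 3 *
        (ψ' φ * (ψ''' φ - ψ' φ - (ψ' φ) ^ 2) - 2 * (ψ'' φ) ^ 2) / (a * (w φ) ^ 3) := by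
  have hden : ∀ t, (0:ℝ) < 1 + ψ' t := fun t => by have := hpos t; linarith
  set r : ℝ → ℝ := fun t => a * ψ' t / (1 + ψ' t) with hrdef
  set r1 : ℝ → ℝ := fun t => a * ψ'' t / (1 + ψ' t) ^ 2 with hr1def
  set r2 : ℝ → ℝ := fun t => a * (ψ''' t * (1 + ψ' t) - 2 * (ψ'' t) ^ 2) / (1 + ψ' t) ^ 3
    with hr2def
  have hr : ∀ t, HasDerivAt r (r1 t) t := by
    intro t
    have h := ((hd2 t).const_mul a).div ((hasDerivAt_const t (1:ℝ)).add (hd2 t)) (hden t).ne'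
    convert h using 1
    show a * ψ'' t / (1 + ψ' t) ^ 2 = _
    simp only [Pi.add_apply]
    rw [div_eq_div_iff (pow_ne_zero 2 (hden t).ne') (pow_ne_zero 2 (hden t).ne')]
    ring
    · rfl
    · rfl
    · exact funext fun s => rfl
  have hr1 : ∀ t, HasDerivAt r1 (r2 t) t := by
    intro t
    have h := ((hd3 t).const_mul a).div
      (((hasDerivAt_const t (1:ℝ)).add (hd2 t)).pow 2) (pow_ne_zero 2 (hden t).ne')
    convert h using 1
    show a * (ψ''' t * (1 + ψ' t) - 2 * ψ'' t ^ 2) / (1 + ψ' t) ^ 3 = _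
    simp only [Pi.add_apply, Pi.pow_apply]
    rw [div_eq_div_iff (pow_ne_zero 3 (hden t).ne')
      (pow_ne_zero 2 (pow_ne_zero 2 (hden t).ne'))]
    ring
    · rfl
    · rfl
    · exact funext fun s => rfl
  have hS : 0 < r1 φ ^ 2 + r φ ^ 2 := by
    have hrpos : 0 < r φ := by
      simp only [hrdef]
      exact div_pos (mul_pos ha (hpos φ)) (hden φ)
    nlinarith [sq_nonneg (r1 φ)]
  have key := curv_aux r r1 r2 φ hr hr1 X_P T κ hX hT (hκ φ) hS
  have hsq : Real.sqrt (r1 φ ^ 2 + r φ ^ 2) = a * w φ / (1 + ψ' φ) ^ 2 := by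
    have harg : r1 φ ^ 2 + r φ ^ 2 = (a * w φ / (1 + ψ' φ) ^ 2) ^ 2 := by
      rw [hw φ]
      have h1 : Real.sqrt ((ψ'' φ) ^ 2 + (ψ' φ) ^ 2 * (1 + ψ' φ) ^ 2) ^ 2
          = (ψ'' φ) ^ 2 + (ψ' φ) ^ 2 * (1 + ψ' φ) ^ 2 := Real.sq_sqrt (by positivity)
      simp only [hrdef, hr1def]
      field_simp [(hden φ).ne']
      rw [h1]
    rw [harg, Real.sqrt_sq
      (div_pos (mul_pos ha (hwpos φ)) (pow_pos (hden φ) 2)).le]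
  rw [hsq] at key
  have hne : a * (w φ) ^ 3 ≠ 0 := (mul_pos ha (pow_pos (hwpos φ) 3)).ne'
  rw [eq_div_iff hne]
  have h1 : (1 + ψ' φ) ≠ 0 := (hden φ).ne'
  simp only [hrdef, hr1def, hr2def] at key
  field_simp [h1, (hwpos φ).ne', ha.ne'] at key
  have h2 : κ φ * (a * w φ ^ 3) * (a ^ 2 * (1 + ψ' φ) ^ 10)
      = ((1 + ψ' φ) ^ 3 * (ψ' φ * (ψ''' φ - ψ' φ - ψ' φ ^ 2) - 2 * ψ'' φ ^ 2))
        * (a ^ 2 * (1 + ψ' φ) ^ 10) := by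
    linear_combination (a ^ 2 * (1 + ψ' φ) ^ 10) * key
  exact mul_right_cancel₀ (mul_ne_zero (pow_ne_zero 2 ha.ne') (pow_ne_zero 10 h1)) h2
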